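/- For the pp-wave metric g = x²dt² + 2dtdz + dx² + dy² and any constants v₁, v₂ ∈ ℝ, the metric ĝ = σ^{-2} g with σ(t,x,y,z) = (√2/2)(e^{-t√2/2} - e^{t√2/2})v₁ + (1/2)(e^{-t√2/2} + e^{t√2/2})v₂ is Ricci-flat on the open set where σ ≠ 0. -/

import Mathlib

open Matrix

/-- Partial derivative in the i-th coordinate direction on ℝ⁴. -/
noncomputable def pd (i : Fin 4) (f : (Fin 4 → ℝ) → ℝ) (x : Fin 4 → ℝ) : ℝ :=
  fderiv ℝ f x (Pi.single i 1)

/-- The pp-wave metric g = x²dt² + 2dtdz + dx² + dy². -/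
noncomputable def ppw (p : Fin 4 → ℝ) : Matrix (Fin 4) (Fin 4) ℝ :=
  !![(p 1) ^ 2, 0, 0, 1;
     0, 1, 0, 0;
     0, 0, 1, 0;
     1, 0, 0, 0]

/-- Christoffel symbols of a metric G. -/
noncomputable def chris (G : (Fin 4 → ℝ) → Matrix (Fin 4) (Fin 4) ℝ)
    (p : Fin 4 → ℝ) (k i j : Fin 4) : ℝ :=
  (1/2) * ∑ l, (G p)⁻¹ k l *
    (pd i (fun y => G y j l) p + pd j (fun y => G y i l) p - pd l (fun y => G y i j) p)

/-- Ricci curvature of a metric G in coordinates: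
Ric_{ij} = ∂_k Γᵏ_{ij} - ∂_i Γᵏ_{kj} + Γᵏ_{kl}Γˡ_{ij} - Γᵏ_{il}Γˡ_{kj}. -/
noncomputable def ricci (G : (Fin 4 → ℝ) → Matrix (Fin 4) (Fin 4) ℝ)
    (p : Fin 4 → ℝ) (i j : Fin 4) : ℝ :=
  (∑ k, pd k (fun y => chris G y k i j) p)
  - (∑ k, pd i (fun y => chris G y k k j) p)
  + (∑ k, ∑ l, (chris G p k k l * chris G p l i j - chris G p k i l * chris G p l k j))

/-- The Einstein scale σ. -/
noncomputable def sigmaE (v₁ v₂ : ℝ) (p : Fin 4 → ℝ) : ℝ :=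
  (Real.sqrt 2 / 2) * (Real.exp (-p 0 * Real.sqrt 2 / 2)
    - Real.exp (p 0 * Real.sqrt 2 / 2)) * v₁
  + (1/2) * (Real.exp (-p 0 * Real.sqrt 2 / 2) + Real.exp (p 0 * Real.sqrt 2 / 2)) * v₂

/-- The rescaled metric ĝ = σ⁻² g. -/
noncomputable def ghat (v₁ v₂ : ℝ) (p : Fin 4 → ℝ) : Matrix (Fin 4) (Fin 4) ℝ :=
  ((sigmaE v₁ v₂ p) ^ 2)⁻¹ • ppw p

noncomputable def sp (v₁ v₂ : ℝ) (p : Fin 4 → ℝ) : ℝ :=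
  -(1/2) * (Real.exp (-p 0 * Real.sqrt 2 / 2) + Real.exp (p 0 * Real.sqrt 2 / 2)) * v₁
  + (Real.sqrt 2 / 4) * (Real.exp (p 0 * Real.sqrt 2 / 2) - Real.exp (-p 0 * Real.sqrt 2 / 2)) * v₂

noncomputable def L0 : (Fin 4 → ℝ) →L[ℝ] ℝ := ContinuousLinearMap.proj 0
noncomputable def L1 : (Fin 4 → ℝ) →L[ℝ] ℝ := ContinuousLinearMap.proj 1

lemma sqrt2_sq : Real.sqrt 2 * Real.sqrt 2 = 2 := Real.mul_self_sqrt (by norm_num)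

lemma hasD_em (t : ℝ) : HasDerivAt (fun s : ℝ => Real.exp (-s * Real.sqrt 2 / 2))
    (-(Real.sqrt 2 / 2) * Real.exp (-t * Real.sqrt 2 / 2)) t := by
  have h := (((hasDerivAt_id t).neg.mul_const (Real.sqrt 2)).div_const 2).exp
  simp only [Pi.neg_apply, id_eq] at h
  convert h using 1; ring

lemma hasD_ep (t : ℝ) : HasDerivAt (fun s : ℝ => Real.exp (s * Real.sqrt 2 / 2))
    ((Real.sqrt 2 / 2) * Real.exp (t * Real.sqrt 2 / 2)) t := by
  have h := (((hasDerivAt_id t).mul_const (Real.sqrt 2)).div_const 2).exp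
  simp only [id_eq] at h
  convert h using 1; ring

lemma hasF_sigma (v₁ v₂ : ℝ) (p : Fin 4 → ℝ) :
    HasFDerivAt (sigmaE v₁ v₂) (sp v₁ v₂ p • L0) p := by
  have h0 : HasFDerivAt (fun y : Fin 4 → ℝ => y 0) L0 p := hasFDerivAt_apply 0 p
  have hF : HasDerivAt (fun t : ℝ => (Real.sqrt 2 / 2) * (Real.exp (-t * Real.sqrt 2 / 2)
      - Real.exp (t * Real.sqrt 2 / 2)) * v₁
      + (1/2) * (Real.exp (-t * Real.sqrt 2 / 2) + Real.exp (t * Real.sqrt 2 / 2)) * v₂)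
      (sp v₁ v₂ p) (p 0) := by
    have h := ((((hasD_em (p 0)).sub (hasD_ep (p 0))).const_mul (Real.sqrt 2 / 2)).mul_const v₁).add
      ((((hasD_em (p 0)).add (hasD_ep (p 0))).const_mul ((1:ℝ)/2)).mul_const v₂)
    refine h.congr_deriv (Eq.symm ?_)
    simp only [sp]
    linear_combination ((Real.exp (-p 0 * Real.sqrt 2/2) + Real.exp (p 0 * Real.sqrt 2/2)) * v₁ / 4) * sqrt2_sq
  exact hF.comp_hasFDerivAt p h0

lemma hasF_sp (v₁ v₂ : ℝ) (p : Fin 4 → ℝ) :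
    HasFDerivAt (sp v₁ v₂) ((sigmaE v₁ v₂ p / 2) • L0) p := by
  have h0 : HasFDerivAt (fun y : Fin 4 → ℝ => y 0) L0 p := hasFDerivAt_apply 0 p
  have hF : HasDerivAt (fun t : ℝ => -(1/2) * (Real.exp (-t * Real.sqrt 2 / 2)
      + Real.exp (t * Real.sqrt 2 / 2)) * v₁
      + (Real.sqrt 2 / 4) * (Real.exp (t * Real.sqrt 2 / 2) - Real.exp (-t * Real.sqrt 2 / 2)) * v₂)
      (sigmaE v₁ v₂ p / 2) (p 0) := by
    have h := ((((hasD_em (p 0)).add (hasD_ep (p 0))).const_mul ((-(1/2) : ℝ))).mul_const v₁).add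
      ((((hasD_ep (p 0)).sub (hasD_em (p 0))).const_mul (Real.sqrt 2 / 4)).mul_const v₂)
    refine h.congr_deriv (Eq.symm ?_)
    simp only [sigmaE]
    linear_combination (-(Real.exp (-p 0 * Real.sqrt 2/2) + Real.exp (p 0 * Real.sqrt 2/2)) * v₂ / 8) * sqrt2_sq
  have : sp v₁ v₂ = fun y : Fin 4 → ℝ => -(1/2) * (Real.exp (-y 0 * Real.sqrt 2 / 2)
      + Real.exp (y 0 * Real.sqrt 2 / 2)) * v₁
      + (Real.sqrt 2 / 4) * (Real.exp (y 0 * Real.sqrt 2 / 2) - Real.exp (-y 0 * Real.sqrt 2 / 2)) * v₂ := rfl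
  exact hF.comp_hasFDerivAt p h0

noncomputable def uu (v₁ v₂ : ℝ) (p : Fin 4 → ℝ) : ℝ := sp v₁ v₂ p * (sigmaE v₁ v₂ p)⁻¹

lemma hasF_inv_sigma (v₁ v₂ : ℝ) (p : Fin 4 → ℝ) (h : sigmaE v₁ v₂ p ≠ 0) :
    HasFDerivAt (fun y => (sigmaE v₁ v₂ y)⁻¹)
      ((-(sigmaE v₁ v₂ p ^ 2)⁻¹ * sp v₁ v₂ p) • L0) p := by
  have H := (hasDerivAt_inv h).comp_hasFDerivAt p (hasF_sigma v₁ v₂ p)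
  refine H.congr_fderiv (Eq.symm ?_)
  rw [smul_smul]

lemma hasF_uu (v₁ v₂ : ℝ) (p : Fin 4 → ℝ) (h : sigmaE v₁ v₂ p ≠ 0) :
    HasFDerivAt (uu v₁ v₂) ((1/2 - uu v₁ v₂ p ^ 2) • L0) p := by
  have H := (hasF_sp v₁ v₂ p).mul (hasF_inv_sigma v₁ v₂ p h)
  have : uu v₁ v₂ = fun y => sp v₁ v₂ y * (sigmaE v₁ v₂ y)⁻¹ := rfl
  rw [this]
  refine H.congr_fderiv (Eq.symm ?_)
  ext y
  simp [uu, L0]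
  field_simp
  ring

lemma hasF_csq (v₁ v₂ : ℝ) (p : Fin 4 → ℝ) (h : sigmaE v₁ v₂ p ≠ 0) :
    HasFDerivAt (fun y => ((sigmaE v₁ v₂ y) ^ 2)⁻¹)
      ((-2 * uu v₁ v₂ p * ((sigmaE v₁ v₂ p) ^ 2)⁻¹) • L0) p := by
  have hsq : ((sigmaE v₁ v₂ p) ^ 2) ≠ 0 := pow_ne_zero _ h
  have hD : HasDerivAt (fun t : ℝ => (t ^ 2)⁻¹)
      (-(2 * sigmaE v₁ v₂ p) / (sigmaE v₁ v₂ p ^ 2) ^ 2) (sigmaE v₁ v₂ p) := by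
    have := (hasDerivAt_pow 2 (sigmaE v₁ v₂ p)).inv hsq
    refine this.congr_deriv (Eq.symm ?_)
    push_cast
    ring
  have H := hD.comp_hasFDerivAt p (hasF_sigma v₁ v₂ p)
  refine H.congr_fderiv (Eq.symm ?_)
  rw [smul_smul]
  congr 1
  unfold uu
  field_simp
lemma ginv_eq (v₁ v₂ : ℝ) (q : Fin 4 → ℝ) (h : sigmaE v₁ v₂ q ≠ 0) :
    (ghat v₁ v₂ q)⁻¹ = (sigmaE v₁ v₂ q) ^ 2 •
      !![0, 0, 0, 1; 0, 1, 0, 0; 0, 0, 1, 0; 1, 0, 0, -(q 1) ^ 2] := by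
  apply Matrix.inv_eq_right_inv
  have hsq : (sigmaE v₁ v₂ q) ^ 2 ≠ 0 := pow_ne_zero _ h
  ext i j
  fin_cases i <;> fin_cases j <;>
    simp [ghat, ppw, Matrix.mul_apply, Fin.sum_univ_four, Matrix.smul_apply,
      Matrix.one_apply, Matrix.vecHead, Matrix.vecTail, hsq] <;>
    field_simp <;> ring
lemma pd_hasF {f : (Fin 4 → ℝ) → ℝ} {L : (Fin 4 → ℝ) →L[ℝ] ℝ} {q : Fin 4 → ℝ}
    (h : HasFDerivAt f L q) (i : Fin 4) : pd i f q = L (Pi.single i 1) := by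
  rw [pd, h.fderiv]

lemma pd_const (c : ℝ) (i : Fin 4) (q : Fin 4 → ℝ) : pd i (fun _ => c) q = 0 := by
  simp [pd]

lemma L0_single (i : Fin 4) : L0 (Pi.single i 1) = if i = 0 then 1 else 0 := by
  simp [L0, Pi.single_apply]
  fin_cases i <;> simp

lemma L1_single (i : Fin 4) : L1 (Pi.single i 1) = if i = 1 then 1 else 0 := by
  simp [L1, Pi.single_apply]
  fin_cases i <;> simp

lemma hasF_x1sq (q : Fin 4 → ℝ) :
    HasFDerivAt (fun y : Fin 4 → ℝ => (y 1) ^ 2) ((2 * q 1) • L1) q := by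
  have hD : HasDerivAt (fun t : ℝ => t ^ 2) (((2 : ℕ) : ℝ) * q 1 ^ (2 - 1)) (q 1) :=
    hasDerivAt_pow 2 (q 1)
  have H : HasFDerivAt ((fun t : ℝ => t ^ 2) ∘ (fun y : Fin 4 → ℝ => y 1))
      ((((2 : ℕ) : ℝ) * q 1 ^ (2 - 1)) •
        (ContinuousLinearMap.proj 1 : (Fin 4 → ℝ) →L[ℝ] ℝ)) q :=
    hD.comp_hasFDerivAt q (hasFDerivAt_apply 1 q)
  have H' : HasFDerivAt (fun y : Fin 4 → ℝ => (y 1) ^ 2)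
      ((((2 : ℕ) : ℝ) * q 1 ^ (2 - 1)) •
        (ContinuousLinearMap.proj 1 : (Fin 4 → ℝ) →L[ℝ] ℝ)) q := H
  refine H'.congr_fderiv (Eq.symm ?_)
  norm_num
  rfl

lemma pd_M1 (v₁ v₂ : ℝ) (q : Fin 4 → ℝ) (h : sigmaE v₁ v₂ q ≠ 0) (i : Fin 4) :
    pd i (fun y => ((sigmaE v₁ v₂ y) ^ 2)⁻¹ * (y 1) ^ 2) q =
      if i = 0 then -2 * uu v₁ v₂ q * ((sigmaE v₁ v₂ q) ^ 2)⁻¹ * (q 1) ^ 2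
      else if i = 1 then ((sigmaE v₁ v₂ q) ^ 2)⁻¹ * (2 * q 1) else 0 := by
  have H : HasFDerivAt (fun y => ((sigmaE v₁ v₂ y) ^ 2)⁻¹ * (y 1) ^ 2)
      ((((sigmaE v₁ v₂ q) ^ 2)⁻¹) • ((2 * q 1) • L1) +
        ((q 1) ^ 2) • ((-2 * uu v₁ v₂ q * ((sigmaE v₁ v₂ q) ^ 2)⁻¹) • L0)) q :=
    (hasF_csq v₁ v₂ q h).mul (hasF_x1sq q)
  rw [pd_hasF H i]
  simp [L0_single, L1_single]
  fin_cases i <;> simp <;> ring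

lemma pd_M2 (v₁ v₂ : ℝ) (q : Fin 4 → ℝ) (h : sigmaE v₁ v₂ q ≠ 0) (i : Fin 4) :
    pd i (fun y => ((sigmaE v₁ v₂ y) ^ 2)⁻¹) q =
      if i = 0 then -2 * uu v₁ v₂ q * ((sigmaE v₁ v₂ q) ^ 2)⁻¹ else 0 := by
  rw [pd_hasF (hasF_csq v₁ v₂ q h) i]
  simp [L0_single]

lemma pd_C1 (v₁ v₂ : ℝ) (q : Fin 4 → ℝ) (h : sigmaE v₁ v₂ q ≠ 0) (i : Fin 4) :
    pd i (fun y => -(2 * uu v₁ v₂ y)) q =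
      if i = 0 then -(2 * (1/2 - uu v₁ v₂ q ^ 2)) else 0 := by
  rw [pd_hasF (f := fun y => -(2 * uu v₁ v₂ y)) ((hasF_uu v₁ v₂ q h).const_mul 2).neg i]
  simp [L0_single]
  fin_cases i <;> simp <;> ring

lemma pd_C2 (q : Fin 4 → ℝ) (i : Fin 4) :
    pd i (fun y : Fin 4 → ℝ => -y 1) q = if i = 1 then -1 else 0 := by
  rw [pd_hasF (f := fun y : Fin 4 → ℝ => -y 1) (hasFDerivAt_apply 1 q).neg i]
  simp [L1_single]
  fin_cases i <;> simp

lemma pd_C3 (v₁ v₂ : ℝ) (q : Fin 4 → ℝ) (h : sigmaE v₁ v₂ q ≠ 0) (i : Fin 4) :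
    pd i (fun y => (y 1) ^ 2 * uu v₁ v₂ y) q =
      if i = 0 then (q 1) ^ 2 * (1/2 - uu v₁ v₂ q ^ 2)
      else if i = 1 then 2 * q 1 * uu v₁ v₂ q else 0 := by
  have H : HasFDerivAt (fun y => (y 1) ^ 2 * uu v₁ v₂ y)
      (((q 1) ^ 2) • ((1/2 - uu v₁ v₂ q ^ 2) • L0) +
        (uu v₁ v₂ q) • ((2 * q 1) • L1)) q :=
    (hasF_x1sq q).mul (hasF_uu v₁ v₂ q h)
  rw [pd_hasF H i]
  simp [L0_single, L1_single]
  fin_cases i <;> simp <;> ring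

lemma pd_C4 (v₁ v₂ : ℝ) (q : Fin 4 → ℝ) (h : sigmaE v₁ v₂ q ≠ 0) (i : Fin 4) :
    pd i (fun y => -uu v₁ v₂ y) q =
      if i = 0 then -(1/2 - uu v₁ v₂ q ^ 2) else 0 := by
  rw [pd_hasF (f := fun y => -uu v₁ v₂ y) (hasF_uu v₁ v₂ q h).neg i]
  simp [L0_single]
  split <;> ring

lemma pd_C5 (q : Fin 4 → ℝ) (i : Fin 4) :
    pd i (fun y : Fin 4 → ℝ => y 1) q = if i = 1 then 1 else 0 := by
  rw [pd_hasF (hasFDerivAt_apply 1 q) i]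
  fin_cases i <;> simp [Pi.single_apply]

lemma pd_C6 (v₁ v₂ : ℝ) (q : Fin 4 → ℝ) (h : sigmaE v₁ v₂ q ≠ 0) (i : Fin 4) :
    pd i (uu v₁ v₂) q = if i = 0 then (1/2 - uu v₁ v₂ q ^ 2) else 0 := by
  rw [pd_hasF (hasF_uu v₁ v₂ q h) i]
  simp [L0_single]
noncomputable def ct (v₁ v₂ : ℝ) (q : Fin 4 → ℝ) : Fin 4 → Matrix (Fin 4) (Fin 4) ℝ :=
  ![!![-(2 * uu v₁ v₂ q), 0, 0, 0; 0, 0, 0, 0; 0, 0, 0, 0; 0, 0, 0, 0],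
    !![-q 1, -uu v₁ v₂ q, 0, 0; -uu v₁ v₂ q, 0, 0, 0; 0, 0, 0, 0; 0, 0, 0, 0],
    !![0, 0, -uu v₁ v₂ q, 0; 0, 0, 0, 0; -uu v₁ v₂ q, 0, 0, 0; 0, 0, 0, 0],
    !![(q 1) ^ 2 * uu v₁ v₂ q, q 1, 0, 0; q 1, uu v₁ v₂ q, 0, 0; 0, 0, uu v₁ v₂ q, 0;
       0, 0, 0, 0]]

set_option maxHeartbeats 2000000 in
lemma chris_ghat (v₁ v₂ : ℝ) (q : Fin 4 → ℝ) (h : sigmaE v₁ v₂ q ≠ 0) (k i j : Fin 4) :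
    chris (ghat v₁ v₂) q k i j = ct v₁ v₂ q k i j := by
  have hs : sigmaE v₁ v₂ q ^ 2 ≠ 0 := pow_ne_zero _ h
  fin_cases k <;> fin_cases i <;> fin_cases j <;>
    (rw [chris, ginv_eq v₁ v₂ q h, Fin.sum_univ_four]
     simp [ghat, ppw, ct, Matrix.smul_apply, Matrix.vecHead, Matrix.vecTail,
       pd_M1 v₁ v₂ q h, pd_M2 v₁ v₂ q h, pd_const]
     try unfold uu
     try field_simp
     try ring)

lemma pd_chris_congr (v₁ v₂ : ℝ) (p : Fin 4 → ℝ) (h : sigmaE v₁ v₂ p ≠ 0) (m k i j : Fin 4) :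
    pd m (fun y => chris (ghat v₁ v₂) y k i j) p = pd m (fun y => ct v₁ v₂ y k i j) p := by
  unfold pd
  congr 1
  apply Filter.EventuallyEq.fderiv_eq
  have hev : ∀ᶠ y in nhds p, sigmaE v₁ v₂ y ≠ 0 :=
    (hasF_sigma v₁ v₂ p).differentiableAt.continuousAt.eventually_ne h
  exact hev.mono fun y hy => chris_ghat v₁ v₂ y hy k i j


set_option maxHeartbeats 12000000

/-- ĝ = σ⁻²g is Ricci-flat wherever σ ≠ 0. -/
theorem ppwave_einstein_scale_ricci_flat :
    ∀ (v₁ v₂ : ℝ) (p : Fin 4 → ℝ), sigmaE v₁ v₂ p ≠ 0 →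
      ∀ i j, ricci (ghat v₁ v₂) p i j = 0 := by
  intro v₁ v₂ p h i j
  rw [ricci]
  simp only [Fin.sum_univ_four]
  simp only [pd_chris_congr v₁ v₂ p h]
  fin_cases i <;> fin_cases j <;>
    (simp [ct, chris_ghat v₁ v₂ p h, Matrix.vecHead, Matrix.vecTail,
       pd_C1 v₁ v₂ p h, pd_C2 p, pd_C3 v₁ v₂ p h, pd_C4 v₁ v₂ p h, pd_C5 p, pd_C6 v₁ v₂ p h,
       pd_const]
     try ring)
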